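/- Let A ∈ ℂ^{M×N} with N = d^n and rank(A) ≤ p, and let Ω = Ω^{(1)} ⊙ ⋯ ⊙ Ω^{(n)} be a Khatri–Rao product of independent matrices Ω^{(j)} ∈ ℂ^{d×p} with i.i.d. standard complex Gaussian entries. Then with probability one, rank(AΩ) = rank(A), and hence the randomized QB approximation with test matrix Ω recovers A exactly. -/

import Mathlib

open Matrix MeasureTheory ProbabilityTheory

/-- The Khatri–Rao product of `n` matrices `W j ∈ ℂ^{d×p}`. -/
def krProd {n d p : ℕ} (W : Fin n → Matrix (Fin d) (Fin p) ℂ) :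
    Matrix (Fin n → Fin d) (Fin p) ℂ :=
  Matrix.of fun idx k => ∏ j, W j (idx j) k

noncomputable section StmtFiveAux

namespace StmtFiveAux

/-- Evaluation of a complex `MvPolynomial` at real arguments is measurable. -/
lemma measurable_polyEval {ι : Type*} [Fintype ι] (q : MvPolynomial ι ℂ) :
    Measurable fun x : ι → ℝ => MvPolynomial.eval (fun i => (x i : ℂ)) q := by
  classical
  simp_rw [MvPolynomial.eval_eq]
  refine Finset.measurable_sum _ fun m _ => Measurable.mul measurable_const ?_
  refine Finset.measurable_prod _ fun i _ => ?_
  exact (Complex.measurable_ofReal.comp (measurable_pi_apply i)).pow_const _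

/-- The zero set of a complex polynomial, nonvanishing at a real point, is null
for the standard Gaussian product measure, `Fin k` version. -/
lemma gauss_null_fin : ∀ (k : ℕ) (q : MvPolynomial (Fin k) ℂ) (x₀ : Fin k → ℝ),
    MvPolynomial.eval (fun i => (x₀ i : ℂ)) q ≠ 0 →
    (Measure.pi fun _ : Fin k => gaussianReal 0 (1/2 : NNReal))
      {x | MvPolynomial.eval (fun i => (x i : ℂ)) q = 0} = 0 := by
  intro k
  induction k with
  | zero =>
    intro q x₀ h
    convert measure_empty (μ := Measure.pi fun _ : Fin 0 => gaussianReal 0 (1/2 : NNReal))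
    rw [Set.eq_empty_iff_forall_notMem]
    intro x hx
    exact h (by rwa [Subsingleton.elim x₀ x])
  | succ k ih =>
    intro q x₀ h
    set μ1 : Measure ℝ := gaussianReal 0 (1/2 : NNReal) with hμ1
    set ν : Measure (Fin k → ℝ) := Measure.pi fun _ => gaussianReal 0 (1/2 : NNReal) with hν
    set F : Polynomial (MvPolynomial (Fin k) ℂ) := MvPolynomial.finSuccEquiv ℂ k q with hF
    set P : (Fin k → ℝ) → Polynomial ℂ :=
      fun s => Polynomial.map (MvPolynomial.eval fun i => (s i : ℂ)) F with hP
    have keyeval : ∀ (a : ℝ) (s : Fin k → ℝ),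
        MvPolynomial.eval (fun i => ((Fin.cons a s : Fin (k+1) → ℝ) i : ℂ)) q
          = Polynomial.eval (a : ℂ) (P s) := by
      intro a s
      have hfun : (fun i => ((Fin.cons a s : Fin (k+1) → ℝ) i : ℂ))
          = Fin.cons (a : ℂ) (fun i => (s i : ℂ)) := by
        funext i
        refine Fin.cases ?_ ?_ i <;> simp
      rw [hfun, MvPolynomial.eval_eq_eval_mv_eval']
    have hx₀ : Polynomial.eval ((x₀ 0 : ℝ) : ℂ) (P (Fin.tail x₀)) ≠ 0 := by
      rw [← keyeval]
      simpa [Fin.cons_self_tail] using h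
    have hPs₀ : P (Fin.tail x₀) ≠ 0 := fun h0 => hx₀ (by rw [h0]; simp)
    obtain ⟨m, hm⟩ : ∃ m, (P (Fin.tail x₀)).coeff m ≠ 0 := by
      by_contra hc
      push_neg at hc
      exact hPs₀ (Polynomial.ext fun m => hc m)
    have hm' : MvPolynomial.eval (fun i => ((Fin.tail x₀) i : ℂ)) (F.coeff m) ≠ 0 := by
      rwa [hP, Polynomial.coeff_map] at hm
    have hN : ν {s | MvPolynomial.eval (fun i => (s i : ℂ)) (F.coeff m) = 0} = 0 :=
      ih (F.coeff m) (Fin.tail x₀) hm'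
    have hconsmeas : Measurable (fun p : ℝ × (Fin k → ℝ) => (Fin.cons p.1 p.2 : Fin (k+1) → ℝ)) := by
      refine measurable_pi_lambda _ (fun i => ?_)
      refine Fin.cases ?_ ?_ i
      · simpa using measurable_fst
      · intro j
        simpa [Function.comp_def] using (measurable_pi_apply j).comp measurable_snd
    set S : Set (Fin (k+1) → ℝ) := {x | MvPolynomial.eval (fun i => (x i : ℂ)) q = 0} with hS
    have mS : MeasurableSet S := (measurable_polyEval q) (measurableSet_singleton 0)
    set T : Set (ℝ × (Fin k → ℝ)) :=
      (fun p : ℝ × (Fin k → ℝ) => (Fin.cons p.1 p.2 : Fin (k+1) → ℝ)) ⁻¹' S with hT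
    have mT : MeasurableSet T := hconsmeas mS
    have me := measurePreserving_piFinSuccAbove (fun _ : Fin (k+1) => gaussianReal 0 (1/2 : NNReal)) 0
    have happ : ∀ x : Fin (k+1) → ℝ,
        (MeasurableEquiv.piFinSuccAbove (fun _ : Fin (k+1) => ℝ) 0) x = (x 0, Fin.tail x) := by
      intro x
      simp [MeasurableEquiv.piFinSuccAbove, Fin.tail]
    have hpre : (MeasurableEquiv.piFinSuccAbove (fun _ : Fin (k+1) => ℝ) 0) ⁻¹' T = S := by
      ext x
      simp only [Set.mem_preimage, happ, hT, hS, Set.mem_setOf_eq]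
      rw [show (Fin.cons (x 0) (Fin.tail x) : Fin (k+1) → ℝ) = x from Fin.cons_self_tail x]
    have hmain : (Measure.pi fun _ : Fin (k+1) => gaussianReal 0 (1/2 : NNReal)) S
        = (μ1.prod ν) T := by
      rw [← hpre]
      exact me.measure_preimage mT.nullMeasurableSet
    rw [hmain]
    set T' : Set ((Fin k → ℝ) × ℝ) := Prod.swap ⁻¹' T with hT'
    have mT' : MeasurableSet T' := measurable_swap mT
    have hswap : (μ1.prod ν) T = (ν.prod μ1) T' := by
      rw [hT', ← Measure.prod_swap, Measure.map_apply measurable_swap mT]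
    rw [hswap, Measure.measure_prod_null mT']
    have hae : ∀ᵐ s ∂ν,
        s ∉ {s : Fin k → ℝ | MvPolynomial.eval (fun i => (s i : ℂ)) (F.coeff m) = 0} := by
      rw [ae_iff]
      simpa using hN
    filter_upwards [hae] with s hs
    have hPs : P s ≠ 0 := by
      intro h0
      apply hs
      have : (P s).coeff m = 0 := by rw [h0]; simp
      rwa [hP, Polynomial.coeff_map] at this
    have hslice : (Prod.mk s ⁻¹' T') = (fun a : ℝ => (a : ℂ)) ⁻¹' {z : ℂ | (P s).IsRoot z} := by
      ext a
      simp only [Set.mem_preimage, hT', hT, hS, Set.mem_setOf_eq, Prod.swap, Polynomial.IsRoot]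
      rw [keyeval]
    have hfin : (Prod.mk s ⁻¹' T').Finite := by
      rw [hslice]
      exact (Polynomial.finite_setOf_isRoot hPs).preimage Complex.ofReal_injective.injOn
    show μ1 (Prod.mk s ⁻¹' T') = 0
    exact gaussianReal_absolutelyContinuous 0 (by norm_num) (hfin.measure_zero volume)

/-- General index type version. -/
lemma gauss_null {ι : Type*} [Fintype ι] (q : MvPolynomial ι ℂ) (x₀ : ι → ℝ)
    (h : MvPolynomial.eval (fun i => (x₀ i : ℂ)) q ≠ 0) :
    (Measure.pi fun _ : ι => gaussianReal 0 (1/2 : NNReal))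
      {x | MvPolynomial.eval (fun i => (x i : ℂ)) q = 0} = 0 := by
  classical
  set k := Fintype.card ι
  set f : Fin k ≃ ι := (Fintype.equivFin ι).symm with hf
  have me := measurePreserving_piCongrLeft (fun _ : ι => gaussianReal 0 (1/2 : NNReal)) f
  set S : Set (ι → ℝ) := {x | MvPolynomial.eval (fun i => (x i : ℂ)) q = 0} with hS
  have mS : MeasurableSet S := (measurable_polyEval q) (measurableSet_singleton 0)
  have happ : ∀ (y : Fin k → ℝ) (j : ι),
      (MeasurableEquiv.piCongrLeft (fun _ : ι => ℝ) f) y j = y (f.symm j) := by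
    intro y j
    conv_lhs => rw [show j = f (f.symm j) by simp]
    exact Equiv.piCongrLeft_apply_apply (fun _ : ι => ℝ) f y (f.symm j)
  have hpre : (MeasurableEquiv.piCongrLeft (fun _ : ι => ℝ) f) ⁻¹' S
      = {y : Fin k → ℝ | MvPolynomial.eval (fun i => (y i : ℂ))
          (MvPolynomial.rename f.symm q) = 0} := by
    have harg : ∀ y : Fin k → ℝ,
        ((fun i => ((y i : ℝ) : ℂ)) ∘ f.symm)
          = fun i : ι => (((MeasurableEquiv.piCongrLeft (fun _ : ι => ℝ) f) y i : ℝ) : ℂ) := by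
      intro y
      funext j
      simp [happ]
    ext y
    simp only [Set.mem_preimage, hS, Set.mem_setOf_eq, MvPolynomial.eval_rename, harg]
  have h0 : (Measure.pi fun _ : Fin k => gaussianReal 0 (1/2 : NNReal))
      ((MeasurableEquiv.piCongrLeft (fun _ : ι => ℝ) f) ⁻¹' S) = 0 := by
    rw [hpre]
    refine gauss_null_fin k (MvPolynomial.rename f.symm q) (fun i => x₀ (f i)) ?_
    rw [MvPolynomial.eval_rename]
    have : ((fun i : Fin k => ((x₀ (f i) : ℝ) : ℂ)) ∘ f.symm) = fun j : ι => (x₀ j : ℂ) := by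
      funext j
      simp
    rw [this]
    exact h
  calc (Measure.pi fun _ : ι => gaussianReal 0 (1/2 : NNReal)) S
      = (Measure.pi fun _ : Fin k => gaussianReal 0 (1/2 : NNReal))
        ((MeasurableEquiv.piCongrLeft (fun _ : ι => ℝ) f) ⁻¹' S) :=
        (me.measure_preimage mS.nullMeasurableSet).symm
    _ = 0 := h0

/-- Independent Gaussian coordinates have product Gaussian joint law. -/
lemma map_eq_pi {Ωsp : Type*} {ι : Type*} [Fintype ι] [MeasurableSpace Ωsp]
    (μ : Measure Ωsp) [IsProbabilityMeasure μ] (g : ι → Ωsp → ℝ)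
    (hmeas : ∀ i, Measurable (g i))
    (hindep : iIndepFun g μ)
    (hdist : ∀ i, μ.map (g i) = gaussianReal 0 (1/2 : NNReal)) :
    μ.map (fun ω i => g i ω) = Measure.pi fun _ : ι => gaussianReal 0 (1/2 : NNReal) := by
  classical
  have hG : Measurable (fun ω i => g i ω) := measurable_pi_lambda _ hmeas
  refine (Measure.pi_eq (μ := fun _ : ι => gaussianReal 0 (1/2 : NNReal)) fun B hB => ?_).symm
  rw [Measure.map_apply hG (MeasurableSet.univ_pi hB)]
  have hpre : (fun ω i => g i ω) ⁻¹' (Set.pi Set.univ B) = ⋂ i ∈ Finset.univ, g i ⁻¹' B i := by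
    ext ω
    simp [Set.mem_pi]
  rw [hpre, hindep.measure_inter_preimage_eq_mul Finset.univ (fun i _ => hB i)]
  refine Finset.prod_congr rfl fun i _ => ?_
  rw [← hdist i, Measure.map_apply (hmeas i) (hB i)]

/-- QB exactness from rank equality. -/
lemma qb_exact {M p : ℕ} {N : Type*} [Fintype N] [DecidableEq N]
    (A : Matrix (Fin M) N ℂ) (B : Matrix N (Fin p) ℂ)
    (hr : (A * B).rank = A.rank) (k : ℕ) (Q : Matrix (Fin M) (Fin k) ℂ)
    (hQ : Qᴴ * Q = 1)
    (hrange : LinearMap.range Q.mulVecLin = LinearMap.range (A * B).mulVecLin) :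
    Q * (Qᴴ * A) = A := by
  have h1 : LinearMap.range (A * B).mulVecLin ≤ LinearMap.range A.mulVecLin := by
    rw [Matrix.mulVecLin_mul]
    exact LinearMap.range_comp_le_range _ _
  have h2 : LinearMap.range (A * B).mulVecLin = LinearMap.range A.mulVecLin :=
    Submodule.eq_of_le_of_finrank_eq h1 hr
  have h3 : LinearMap.range Q.mulVecLin = LinearMap.range A.mulVecLin := hrange.trans h2
  ext m c
  set v : Fin M → ℂ := A *ᵥ Pi.single c 1 with hv
  have hvmem : v ∈ LinearMap.range Q.mulVecLin := by
    rw [h3]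
    exact ⟨Pi.single c 1, rfl⟩
  obtain ⟨y, hy⟩ := hvmem
  have hy' : Q *ᵥ y = v := hy
  have key : (Q * (Qᴴ * A)) *ᵥ Pi.single c 1 = v := by
    rw [← Matrix.mulVec_mulVec, ← Matrix.mulVec_mulVec, ← hv, ← hy', Matrix.mulVec_mulVec,
      Matrix.mulVec_mulVec, Matrix.mul_assoc Q Qᴴ Q, hQ, Matrix.mul_one]
  have h5 := congrFun key m
  simpa [hv, Matrix.mulVec_single] using h5

lemma rank_eq_of_cert {M p r : ℕ} {N : Type*} [Fintype N]
    (A : Matrix (Fin M) N ℂ) (Ω : Matrix N (Fin p) ℂ)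
    (Uc : Matrix (Fin r) (Fin M) ℂ) (S : Matrix (Fin p) (Fin r) ℂ)
    (hrA : A.rank = r)
    (hdet : (Uc * (A * Ω) * S).det ≠ 0) :
    (A * Ω).rank = A.rank := by
  refine le_antisymm (Matrix.rank_mul_le_left A Ω) ?_
  have hunit : IsUnit (Uc * (A * Ω) * S) :=
    (Matrix.isUnit_iff_isUnit_det _).2 (isUnit_iff_ne_zero.2 hdet)
  have h1 : (Uc * (A * Ω) * S).rank = r := by
    rw [Matrix.rank_of_isUnit _ hunit, Fintype.card_fin]
  calc A.rank = (Uc * (A * Ω) * S).rank := by rw [h1, hrA]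
    _ = (Uc * ((A * Ω) * S)).rank := by rw [Matrix.mul_assoc]
    _ ≤ ((A * Ω) * S).rank := Matrix.rank_mul_le_right _ _
    _ ≤ (A * Ω).rank := Matrix.rank_mul_le_left _ _

lemma exists_basis_cols {M : ℕ} {N : Type*} [Fintype N] [DecidableEq N]
    (A : Matrix (Fin M) N ℂ) :
    ∃ c' : Fin A.rank → N, (A.submatrix id c').rank = A.rank := by
  classical
  obtain ⟨s, hsub, hspan, hind⟩ := exists_linearIndependent ℂ (Set.range Aᵀ)
  haveI : Fintype s := ((Set.finite_range Aᵀ).subset hsub).fintype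
  have hcard : Fintype.card s = A.rank := by
    rw [Matrix.rank_eq_finrank_span_cols, show Set.range A.col = Set.range Aᵀ from rfl, ← hspan, finrank_span_set_eq_card hind,
      Set.toFinset_card]
  set e : Fin A.rank ≃ s := (Fintype.equivFinOfCardEq hcard).symm with he
  have hex : ∀ v : s, ∃ j : N, Aᵀ j = (v : Fin M → ℂ) := fun v => hsub v.2
  set c' : Fin A.rank → N := fun k => (hex (e k)).choose with hc'
  have hpick : ∀ k, Aᵀ (c' k) = (e k : Fin M → ℂ) := fun k => (hex (e k)).choose_spec
  refine ⟨c', ?_⟩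
  have hT : (A.submatrix id c')ᵀ = fun k => (e k : Fin M → ℂ) := by
    funext k m
    have := congrFun (hpick k) m
    simpa [Matrix.transpose_apply] using this
  have hrange : Set.range (A.submatrix id c')ᵀ = (s : Set (Fin M → ℂ)) := by
    rw [hT]
    have : (fun k => (e k : Fin M → ℂ)) = (Subtype.val : s → Fin M → ℂ) ∘ e := rfl
    rw [this, Set.range_comp, e.surjective.range_eq, Set.image_univ, Subtype.range_coe]
  rw [Matrix.rank_eq_finrank_span_cols,
    show Set.range (A.submatrix id c').col = Set.range (A.submatrix id c')ᵀ from rfl, hrange, hspan,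
    ← show Set.range A.col = Set.range Aᵀ from rfl, ← Matrix.rank_eq_finrank_span_cols]

lemma det_gram_ne_zero {M r : ℕ} (U : Matrix (Fin M) (Fin r) ℂ) (hU : U.rank = r) :
    (Uᴴ * U).det ≠ 0 := by
  open scoped ComplexOrder in
  have h1 : (Uᴴ * U).rank = r := by rw [Matrix.rank_conjTranspose_mul_self, hU]
  have h2 : LinearMap.range (Uᴴ * U).mulVecLin = ⊤ := by
    apply Submodule.eq_top_of_finrank_eq
    rw [← Matrix.rank]
    rw [h1, Module.finrank_pi, Fintype.card_fin]
  have h3 : Function.Surjective (Uᴴ * U).mulVec := by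
    intro v
    obtain ⟨y, hy⟩ := (LinearMap.range_eq_top.mp h2) v
    exact ⟨y, hy⟩
  have h4 : IsUnit (Uᴴ * U) := Matrix.mulVec_surjective_iff_isUnit.mp h3
  exact isUnit_iff_ne_zero.mp ((Matrix.isUnit_iff_isUnit_det _).mp h4)

lemma krProd_indicator {n d p M : ℕ} (A : Matrix (Fin M) (Fin n → Fin d) ℂ)
    (c : Fin p → (Fin n → Fin d)) :
    A * krProd (fun j => Matrix.of fun a b => if a = c b j then (1:ℂ) else 0)
      = A.submatrix id c := by
  classical
  ext m b
  have hprod : ∀ idx : Fin n → Fin d,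
      (∏ j, if idx j = c b j then (1:ℂ) else 0) = if idx = c b then 1 else 0 := by
    intro idx
    by_cases h : idx = c b
    · simp [h]
    · rw [if_neg h]
      obtain ⟨j, hj⟩ := Function.ne_iff.mp h
      exact Finset.prod_eq_zero (Finset.mem_univ j) (if_neg hj)
  simp only [Matrix.mul_apply, krProd, Matrix.of_apply, hprod, Matrix.submatrix_apply, id]
  simp [mul_ite, Finset.sum_ite_eq']

/-- selection matrix -/
def selMat (p r : ℕ) (γ : Fin r → Fin p) : Matrix (Fin p) (Fin r) ℂ :=
  Matrix.of fun b k => if b = γ k then (1:ℂ) else 0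

lemma mul_sel {m p r : ℕ} (B : Matrix (Fin m) (Fin p) ℂ) (γ : Fin r → Fin p) :
    B * selMat p r γ = B.submatrix id γ := by
  ext i k
  simp [selMat, Matrix.mul_apply, Finset.sum_ite_eq']

/-- the generic matrix of complex entries from real coordinates -/
def Wx {n d p : ℕ} (x : Fin n × Fin d × Fin p × Bool → ℝ) :
    Fin n → Matrix (Fin d) (Fin p) ℂ :=
  fun j => Matrix.of fun a b => (x (j,a,b,true) : ℂ) + (x (j,a,b,false) : ℂ) * Complex.I

def qpoly {n d p M r : ℕ} (A : Matrix (Fin M) (Fin n → Fin d) ℂ)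
    (Uc : Matrix (Fin r) (Fin M) ℂ) (γ : Fin r → Fin p) :
    MvPolynomial (Fin n × Fin d × Fin p × Bool) ℂ :=
  Matrix.det (Matrix.of fun i k =>
    ∑ m, MvPolynomial.C (Uc i m) * ∑ idx : (Fin n → Fin d),
      MvPolynomial.C (A m idx) * ∏ j,
        (MvPolynomial.X (j, idx j, γ k, true)
          + MvPolynomial.X (j, idx j, γ k, false) * MvPolynomial.C Complex.I))

lemma eval_qpoly {n d p M r : ℕ} (A : Matrix (Fin M) (Fin n → Fin d) ℂ)
    (Uc : Matrix (Fin r) (Fin M) ℂ) (γ : Fin r → Fin p)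
    (x : Fin n × Fin d × Fin p × Bool → ℝ) :
    MvPolynomial.eval (fun i => (x i : ℂ)) (qpoly A Uc γ)
      = (Uc * (A * krProd (Wx x)) * selMat p r γ).det := by
  classical
  rw [qpoly, RingHom.map_det ((MvPolynomial.eval fun i => (x i : ℂ)) :
      MvPolynomial (Fin n × Fin d × Fin p × Bool) ℂ →+* ℂ), RingHom.mapMatrix_apply]
  rw [Matrix.mul_assoc, mul_sel]
  congr 1
  ext i k
  simp [Matrix.map_apply, map_sum, _root_.map_mul, MvPolynomial.eval_prod,
    MvPolynomial.eval_X, MvPolynomial.eval_C, Matrix.mul_apply, krProd, Wx]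

end StmtFiveAux

end StmtFiveAux

open StmtFiveAux in
/-- If `rank A ≤ p` and `Ω = Ω⁽¹⁾ ⊙ ⋯ ⊙ Ω⁽ⁿ⁾` is a Khatri–Rao product of random
matrices all of whose entries have independent standard complex Gaussian entries
(real and imaginary parts independent `N(0, 1/2)`), then almost surely
`rank (A*Ω) = rank A`, and hence the randomized QB approximation recovers `A`
exactly. -/
theorem stmt5 {Ωsp : Type*} [MeasurableSpace Ωsp] (μ : Measure Ωsp) [IsProbabilityMeasure μ]
    (n d p M : ℕ) (A : Matrix (Fin M) (Fin n → Fin d) ℂ) (hrank : A.rank ≤ p)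
    (W : Fin n → Ωsp → Matrix (Fin d) (Fin p) ℂ)
    (g : Fin n × Fin d × Fin p × Bool → Ωsp → ℝ)
    (hg : ∀ j a b ω, g (j, a, b, true) ω = (W j ω a b).re ∧
      g (j, a, b, false) ω = (W j ω a b).im)
    (hmeas : ∀ i, Measurable (g i))
    (hindep : iIndepFun g μ)
    (hdist : ∀ i, μ.map (g i) = gaussianReal 0 (1/2 : NNReal)) :
    ∀ᵐ ω ∂μ,
      (A * krProd (fun j => W j ω)).rank = A.rank ∧
      ∀ (k : ℕ) (Q : Matrix (Fin M) (Fin k) ℂ), Qᴴ * Q = 1 →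
        LinearMap.range Q.mulVecLin =
          LinearMap.range (A * krProd (fun j => W j ω)).mulVecLin →
        Q * (Qᴴ * A) = A := by
  classical
  rcases isEmpty_or_nonempty (Fin n → Fin d) with hE | hne
  · refine Filter.Eventually.of_forall fun ω => ?_
    have hA0 : A * krProd (fun j => W j ω) = 0 := by
      ext m b
      simp [Matrix.mul_apply]
    have hrA : A.rank = 0 := Nat.le_zero.mp
      (le_trans (Matrix.rank_le_card_width A) (by simp))
    constructor
    · rw [hA0, Matrix.rank_zero, hrA]
    · intro k Q hQ hrange
      ext m c
      exact isEmptyElim c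
  · set r := A.rank with hr
    have hrp : r ≤ p := hrank
    obtain ⟨c', hc'⟩ := exists_basis_cols A
    set U : Matrix (Fin M) (Fin r) ℂ := A.submatrix id c' with hU
    set γ : Fin r → Fin p := fun k => Fin.castLE hrp k with hγ
    set c : Fin p → (Fin n → Fin d) :=
      fun b => if h : (b : ℕ) < r then c' ⟨b, h⟩ else Classical.arbitrary _ with hc
    have hcγ : ∀ k, c (γ k) = c' k := by
      intro k
      simp only [hc, hγ, Fin.coe_castLE]
      rw [dif_pos k.isLt]
    set q := qpoly A Uᴴ γ with hq
    set x₀ : Fin n × Fin d × Fin p × Bool → ℝ :=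
      fun i => if i.2.2.2 = true then (if i.2.1 = c i.2.2.1 i.1 then 1 else 0) else 0 with hx₀
    have hW0 : Wx x₀ = fun j => Matrix.of fun a b => if a = c b j then (1:ℂ) else 0 := by
      funext j
      ext a b
      simp [Wx, hx₀, apply_ite (fun t : ℝ => (t : ℂ))]
    have hwitness : MvPolynomial.eval (fun i => (x₀ i : ℂ)) q ≠ 0 := by
      rw [hq, eval_qpoly, hW0, krProd_indicator, Matrix.mul_assoc, mul_sel]
      have hsub : (A.submatrix id c).submatrix id γ = U := by
        have hfun : c ∘ γ = c' := funext hcγ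
        rw [Matrix.submatrix_submatrix, hfun, hU]
        rfl
      rw [hsub]
      exact det_gram_ne_zero U hc'
    have hmap := map_eq_pi μ g hmeas hindep hdist
    have hnull := gauss_null q x₀ hwitness
    have hGmeas : Measurable (fun ω (i : Fin n × Fin d × Fin p × Bool) => g i ω) :=
      measurable_pi_lambda _ hmeas
    have hSmeas : MeasurableSet
        {x : Fin n × Fin d × Fin p × Bool → ℝ | MvPolynomial.eval (fun i => (x i : ℂ)) q = 0} :=
      measurable_polyEval q (measurableSet_singleton 0)
    have hμ0 : μ {ω | MvPolynomial.eval (fun i => ((g i ω : ℝ) : ℂ)) q = 0} = 0 := by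
      have hset : {ω | MvPolynomial.eval (fun i => ((g i ω : ℝ) : ℂ)) q = 0}
          = (fun ω (i : Fin n × Fin d × Fin p × Bool) => g i ω) ⁻¹'
            {x | MvPolynomial.eval (fun i => (x i : ℂ)) q = 0} := rfl
      rw [hset, ← Measure.map_apply hGmeas hSmeas, hmap]
      exact hnull
    have hae : ∀ᵐ ω ∂μ, MvPolynomial.eval (fun i => ((g i ω : ℝ) : ℂ)) q ≠ 0 := by
      rw [ae_iff]
      simpa using hμ0
    filter_upwards [hae] with ω hω
    have hWω : Wx (fun i => g i ω) = fun j => W j ω := by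
      funext j
      ext a b
      simp only [Wx, Matrix.of_apply]
      rw [(hg j a b ω).1, (hg j a b ω).2]
      exact Complex.re_add_im _
    have hdet : (Uᴴ * (A * krProd (fun j => W j ω)) * selMat p r γ).det ≠ 0 := by
      rw [← hWω, ← eval_qpoly]
      exact hω
    have hrkeq : (A * krProd (fun j => W j ω)).rank = A.rank :=
      rank_eq_of_cert A _ Uᴴ (selMat p r γ) rfl hdet
    exact ⟨hrkeq, fun k Q hQ hrange => qb_exact A _ hrkeq k Q hQ hrange⟩
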